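/- arXiv:1507.02759 — 4 statements merged into one kernel-verified Lean document; each statement's English description precedes it below -/
import Mathlib

section
/- Let K be a compact Hausdorff space and let E be a Banach lattice. If E is order isomorphic to C(K), then the positive cone E₊ = {x ∈ E : x ≥ 0} has nonempty interior; consequently E has an order unit, i.e., there exists u ≥ 0 in E such that for every x ∈ E there is n ∈ ℕ with |x| ≤ n·u. -/
open Topology


/-- If a Banach lattice `E` is (possibly nonlinearly) order isomorphic to
`C(K)` for a compact Hausdorff space `K`, then the positive cone of `E` has nonempty
interior, and `E` has an order unit. -/
theorem stmt1 (K : Type*) [TopologicalSpace K] [CompactSpace K] [T2Space K]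
    (E : Type*) [NormedAddCommGroup E] [Lattice E] [HasSolidNorm E]
    [IsOrderedAddMonoid E] [NormedSpace ℝ E] [PosSMulStrictMono ℝ E] [PosSMulReflectLT ℝ E]
    [CompleteSpace E]
    (T : C(K, ℝ) → E) (hbij : Function.Bijective T)
    (hord : ∀ f g : C(K, ℝ), f ≤ g ↔ T f ≤ T g) :
    (interior {x : E | 0 ≤ x}).Nonempty ∧
      ∃ u : E, 0 ≤ u ∧ ∀ x : E, ∃ n : ℕ, |x| ≤ (n : ℝ) • u := by
  -- The closed order intervals [T(-n·1), T(n·1)] cover E.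
  have hcover : (⋃ n : ℕ, Set.Icc (T (ContinuousMap.const K (-(n : ℝ))))
      (T (ContinuousMap.const K (n : ℝ)))) = Set.univ := by
    ext x
    simp only [Set.mem_iUnion, Set.mem_univ, iff_true]
    obtain ⟨f, rfl⟩ := hbij.2 x
    refine ⟨⌈‖f‖⌉₊, ?_, ?_⟩
    · rw [← hord]
      intro k
      have h1 : ‖f k‖ ≤ ‖f‖ := f.norm_coe_le_norm k
      have h2 : ‖f‖ ≤ (⌈‖f‖⌉₊ : ℝ) := Nat.le_ceil _
      simpa using neg_le_of_abs_le (le_trans (le_of_eq (Real.norm_eq_abs _).symm)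
        (h1.trans h2))
    · rw [← hord]
      intro k
      have h1 : ‖f k‖ ≤ ‖f‖ := f.norm_coe_le_norm k
      have h2 : ‖f‖ ≤ (⌈‖f‖⌉₊ : ℝ) := Nat.le_ceil _
      simpa using le_of_abs_le (le_trans (le_of_eq (Real.norm_eq_abs _).symm)
        (h1.trans h2))
  -- Baire category: some interval has nonempty interior.
  obtain ⟨n, y, hy⟩ := nonempty_interior_of_iUnion_of_closed
    (fun n : ℕ => isClosed_Icc) hcover
  set a := T (ContinuousMap.const K (-(n : ℝ))) with ha
  -- Translate: y - a is an interior point of the positive cone.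
  have hu : (y - a) ∈ interior {x : E | 0 ≤ x} := by
    rw [mem_interior_iff_mem_nhds]
    have hmap : Set.Icc a (T (ContinuousMap.const K (n : ℝ))) ∈ 𝓝 ((y - a) + a) := by
      rw [sub_add_cancel]
      exact mem_interior_iff_mem_nhds.mp hy
    have hcont : ContinuousAt (fun x : E => x + a) (y - a) :=
      (continuous_add_right a).continuousAt
    refine Filter.mem_of_superset (hcont hmap) ?_
    intro x hx
    have : a ≤ x + a := hx.1
    simpa using le_of_add_le_add_right (by simpa using this : 0 + a ≤ x + a)
  refine ⟨⟨y - a, hu⟩, y - a, interior_subset hu, ?_⟩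
  -- An interior point of the cone is an order unit.
  set u := y - a with hu'
  obtain ⟨ε, hε, hball⟩ := Metric.mem_nhds_iff.mp (mem_interior_iff_mem_nhds.mp hu)
  intro x
  set c : ℝ := ε / (2 * (‖x‖ + 1)) with hc
  have hxpos : (0:ℝ) < ‖x‖ + 1 := by positivity
  have hcpos : (0:ℝ) < c := by positivity
  have hvball : u - c • |x| ∈ Metric.ball u ε := by
    rw [Metric.mem_ball, dist_eq_norm]
    have : u - c • |x| - u = -(c • |x|) := by abel
    rw [this, norm_neg, norm_smul, norm_abs_eq_norm, Real.norm_eq_abs,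
      abs_of_pos hcpos]
    have : c * ‖x‖ < c * (2 * (‖x‖ + 1)) := by
      apply mul_lt_mul_of_pos_left _ hcpos
      nlinarith [norm_nonneg x]
    rw [hc] at this ⊢
    calc ε / (2 * (‖x‖ + 1)) * ‖x‖ < ε / (2 * (‖x‖ + 1)) * (2 * (‖x‖ + 1)) := this
      _ = ε := by field_simp
  have hv : (0:E) ≤ u - c • |x| := hball hvball
  have hle : c • |x| ≤ u := sub_nonneg.mp hv
  refine ⟨⌈c⁻¹⌉₊, ?_⟩
  have h1 : |x| = c⁻¹ • (c • |x|) := (inv_smul_smul₀ (ne_of_gt hcpos) _).symm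
  have h2 : c⁻¹ • (c • |x|) ≤ c⁻¹ • u :=
    smul_le_smul_of_nonneg_left hle (le_of_lt (inv_pos.mpr hcpos))
  have h3 : c⁻¹ • u ≤ (⌈c⁻¹⌉₊ : ℝ) • u :=
    smul_le_smul_of_nonneg_right (Nat.le_ceil _) (interior_subset hu)
  calc |x| = c⁻¹ • (c • |x|) := h1
    _ ≤ c⁻¹ • u := h2
    _ ≤ (⌈c⁻¹⌉₊ : ℝ) • u := h3
end

section
/- Let E be a Banach lattice. If E is order isomorphic to c₀ (i.e., there exists a not-necessarily-linear bijection T : c₀ → E such that x ≤ y if and only if Tx ≤ Ty), then E is lattice isomorphic to c₀; that is, there exists a linear bijection S : c₀ → E with S|x| = |Sx| for all x ∈ c₀. -/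
open Filter Topology ZeroAtInfty

namespace ZeroAtInftyContinuousMap

variable {α : Type*} [TopologicalSpace α]

/-- Pointwise supremum on `C₀(α, ℝ)`. -/
noncomputable instance : Max C₀(α, ℝ) where
  max f g :=
    { toFun := fun x => f x ⊔ g x
      continuous_toFun := (map_continuous f).sup (map_continuous g)
      zero_at_infty' := by
        simpa using (zero_at_infty f).sup_nhds (zero_at_infty g) }

/-- Pointwise infimum on `C₀(α, ℝ)`. -/
noncomputable instance : Min C₀(α, ℝ) where
  min f g :=
    { toFun := fun x => f x ⊓ g x
      continuous_toFun := (map_continuous f).inf (map_continuous g)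
      zero_at_infty' := by
        simpa using (zero_at_infty f).inf_nhds (zero_at_infty g) }

/-- `C₀(α, ℝ)` with the pointwise order is a lattice; in particular `c₀ = C₀(ℕ, ℝ)` is the
Banach lattice of real sequences converging to `0` with coordinatewise order. -/
noncomputable instance : Lattice C₀(α, ℝ) :=
  letI : PartialOrder C₀(α, ℝ) := PartialOrder.lift _ DFunLike.coe_injective
  DFunLike.coe_injective.lattice _ Iff.rfl Iff.rfl (fun _ _ => rfl) (fun _ _ => rfl)

end ZeroAtInftyContinuousMap

/-- The unit vector basis `(eₙ)` of `c₀ = C₀(ℕ, ℝ)`. -/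
noncomputable def c0unit (n : ℕ) : C₀(ℕ, ℝ) :=
  { toFun := fun m => if m = n then 1 else 0
    continuous_toFun := continuous_of_discreteTopology
    zero_at_infty' := by
      rw [cocompact_eq_atTop]
      refine tendsto_nhds_of_eventually_eq ?_
      filter_upwards [Filter.eventually_gt_atTop n] with m hm
      exact if_neg (by omega) }
section Utilities

open ZeroAtInftyContinuousMap

/-! ### Basic facts about `c₀ = C₀(ℕ, ℝ)` -/

lemma c0_le_iff (f g : C₀(ℕ, ℝ)) : f ≤ g ↔ ∀ n, f n ≤ g n := Iff.rfl

lemma c0_nonneg_iff (f : C₀(ℕ, ℝ)) : 0 ≤ f ↔ ∀ n, 0 ≤ f n := Iff.rfl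

lemma c0_abs_apply (f : C₀(ℕ, ℝ)) (n : ℕ) : |f| n = |f n| := rfl

lemma c0_inf_apply (f g : C₀(ℕ, ℝ)) (n : ℕ) : (f ⊓ g) n = f n ⊓ g n := rfl

lemma c0_sup_apply (f g : C₀(ℕ, ℝ)) (n : ℕ) : (f ⊔ g) n = f n ⊔ g n := rfl

lemma c0_abs_apply_le_norm (f : C₀(ℕ, ℝ)) (n : ℕ) : |f n| ≤ ‖f‖ := by
  rw [← ZeroAtInftyContinuousMap.norm_toBCF_eq_norm]
  exact f.toBCF.norm_coe_le_norm n

lemma c0_norm_le (f : C₀(ℕ, ℝ)) (C : ℝ) (hC : 0 ≤ C) (h : ∀ n, |f n| ≤ C) : ‖f‖ ≤ C := by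
  rw [← ZeroAtInftyContinuousMap.norm_toBCF_eq_norm]
  exact (BoundedContinuousFunction.norm_le hC).mpr h

lemma c0_tendsto (f : C₀(ℕ, ℝ)) : Filter.Tendsto (fun n => f n) Filter.atTop (nhds 0) := by
  have := zero_at_infty f
  rwa [cocompact_eq_atTop] at this

/-- Build an element of `c₀` from a sequence tending to `0`. -/
noncomputable def c0mk (r : ℕ → ℝ) (h : Filter.Tendsto r Filter.atTop (nhds 0)) : C₀(ℕ, ℝ) :=
  { toFun := r
    continuous_toFun := continuous_of_discreteTopology
    zero_at_infty' := by rwa [cocompact_eq_atTop] }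

@[simp] lemma c0mk_apply (r : ℕ → ℝ) (h) (n : ℕ) : c0mk r h n = r n := rfl

@[simp] lemma c0unit_apply (n m : ℕ) : c0unit n m = if m = n then 1 else 0 := rfl

lemma c0_sum_apply (F : Finset ℕ) (t : ℕ → ℝ) (k : ℕ) :
    (∑ n ∈ F, t n • c0unit n) k = if k ∈ F then t k else 0 := by
  classical
  induction F using Finset.induction with
  | empty => simp
  | @insert a s ha ih =>
      have : (∑ n ∈ insert a s, t n • c0unit n) k
          = (t a • c0unit a) k + (∑ n ∈ s, t n • c0unit n) k := by
        rw [Finset.sum_insert ha]; simp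
      rw [this, ih]
      by_cases hk : k = a
      · subst hk; simp [ha]
      · by_cases hks : k ∈ s <;> simp [hk, hks]

lemma c0_eval_lipschitz (n : ℕ) : LipschitzWith 1 (fun f : C₀(ℕ, ℝ) => f n) := by
  refine LipschitzWith.of_dist_le_mul fun f g => ?_
  rw [NNReal.coe_one, one_mul, dist_eq_norm, dist_eq_norm]
  have : f n - g n = (f - g) n := by simp
  rw [Real.norm_eq_abs, this]
  exact c0_abs_apply_le_norm _ n

lemma c0_isClosed_nonneg : IsClosed {g : C₀(ℕ, ℝ) | 0 ≤ g} := by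
  have : {g : C₀(ℕ, ℝ) | 0 ≤ g} = ⋂ n, (fun g : C₀(ℕ, ℝ) => g n) ⁻¹' Set.Ici (0 : ℝ) := by
    ext g
    simp only [Set.mem_setOf_eq, Set.mem_iInter, Set.mem_preimage, Set.mem_Ici]
    exact c0_nonneg_iff g
  rw [this]
  exact isClosed_iInter fun n => (isClosed_Ici).preimage (c0_eval_lipschitz n).continuous

end Utilities
section LatticeLemmas

variable {E : Type*} [NormedAddCommGroup E] [Lattice E] [HasSolidNorm E] [IsOrderedAddMonoid E]
  [NormedSpace ℝ E] [PosSMulStrictMono ℝ E]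

lemma scal_smul_le_smul {s t : ℝ} (h : s ≤ t) {a : E} (ha : 0 ≤ a) : s • a ≤ t • a := by
  have h1 : 0 ≤ (t - s) • a := smul_nonneg (by linarith) ha
  rw [sub_smul] at h1
  exact sub_nonneg.mp h1

lemma smul_inf_zero {a b : E} {s t : ℝ} (hs : 0 ≤ s) (ht : 0 ≤ t) (ha : 0 ≤ a) (hb : 0 ≤ b)
    (h : a ⊓ b = 0) : (s • a) ⊓ (t • b) = 0 := by
  set c := max s t with hc
  have hc0 : 0 ≤ c := le_trans hs (le_max_left _ _)
  have h1 : (s • a) ⊓ (t • b) ≤ (c • a) ⊓ (c • b) :=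
    inf_le_inf (scal_smul_le_smul (le_max_left _ _) ha) (scal_smul_le_smul (le_max_right _ _) hb)
  have h2 : (c • a) ⊓ (c • b) = c • (a ⊓ b) := by
    rcases eq_or_lt_of_le hc0 with hc' | hc'
    · rw [← hc', zero_smul, zero_smul, zero_smul, inf_idem]
    · exact ((OrderIso.smulRight (β := E) hc').map_inf a b).symm
  have h3 : (s • a) ⊓ (t • b) ≤ 0 := by
    rw [h, smul_zero] at h2; rw [← h2]; exact h1
  exact le_antisymm h3 (le_inf (smul_nonneg hs ha) (smul_nonneg ht hb))

omit [NormedSpace ℝ E] [PosSMulStrictMono ℝ E] in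
lemma add_inf_zero {a b c : E} (ha : 0 ≤ a) (hb : 0 ≤ b) (hc : 0 ≤ c)
    (h1 : a ⊓ c = 0) (h2 : b ⊓ c = 0) : (a + b) ⊓ c = 0 := by
  set d := (a + b) ⊓ c with hd
  have e0 : 0 ≤ b ⊓ c := le_inf hb hc
  have e1 : d ≤ a + (b ⊓ c) := by
    rw [add_inf]
    exact le_inf inf_le_left (le_trans inf_le_right (le_add_of_nonneg_left ha))
  have e2 : d ≤ c + (b ⊓ c) := le_trans inf_le_right (le_add_of_nonneg_right e0)
  have e3 : d - (b ⊓ c) ≤ a ⊓ c :=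
    le_inf (sub_le_iff_le_add'.mpr (by rwa [add_comm] at e1))
      (sub_le_iff_le_add'.mpr (by rwa [add_comm] at e2))
  rw [h1] at e3
  have e4 : d ≤ b ⊓ c := by
    have := sub_le_iff_le_add'.mp e3
    rwa [add_zero] at this
  rw [h2] at e4
  exact le_antisymm e4 (le_inf (add_nonneg ha hb) hc)

omit [NormedSpace ℝ E] [PosSMulStrictMono ℝ E] in
lemma sup_eq_add_of_disjoint {a b : E} (h : a ⊓ b = 0) : a ⊔ b = a + b := by
  have := inf_add_sup a b
  rw [h, zero_add] at this
  exact this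

omit [NormedSpace ℝ E] [PosSMulStrictMono ℝ E] in
lemma sup_sub_dist (a b c : E) : (a ⊔ b) - c = (a - c) ⊔ (b - c) :=
  (OrderIso.subRight c).map_sup a b

omit [NormedSpace ℝ E] [PosSMulStrictMono ℝ E] in
lemma abs_sub_of_disjoint {p q : E} (h : p ⊓ q = 0) :
    |p - q| = p + q := by
  have hsup : p ⊔ q = p + q := sup_eq_add_of_disjoint h
  have h1 : (p - q)⁺ = p := by
    rw [posPart_def]
    have e : (p - q) ⊔ 0 = (p - q) ⊔ (q - q) := by rw [sub_self]
    rw [e, ← sup_sub_dist, hsup]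
    abel
  have h2 : (p - q)⁻ = q := by
    rw [negPart_def]
    have e : -(p - q) ⊔ 0 = (q - p) ⊔ (p - p) := by rw [sub_self, neg_sub]
    rw [e, ← sup_sub_dist, sup_comm, hsup]
    abel
  rw [← posPart_add_negPart (p - q), h1, h2]

end LatticeLemmas
section ChainAndSums

variable {E : Type*} [NormedAddCommGroup E] [Lattice E] [HasSolidNorm E] [IsOrderedAddMonoid E]
  [NormedSpace ℝ E] [PosSMulStrictMono ℝ E]

/-- In a normed lattice, if the order interval `[0, c]` is a chain, then every element of it is
a scalar multiple of `c`. -/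
lemma exists_smul_of_interval_chain (c b : E) (hc : 0 ≤ c) (hb0 : 0 ≤ b) (hbc : b ≤ c)
    (hch : ∀ x y : E, 0 ≤ x → x ≤ c → 0 ≤ y → y ≤ c → x ≤ y ∨ y ≤ x) :
    ∃ t : ℝ, 0 ≤ t ∧ t ≤ 1 ∧ b = t • c := by
  classical
  set A := {s : ℝ | s ∈ Set.Icc (0 : ℝ) 1 ∧ s • c ≤ b} with hA
  have hA0 : (0 : ℝ) ∈ A := by
    refine ⟨⟨le_refl _, zero_le_one⟩, ?_⟩
    rw [zero_smul]; exact hb0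
  have hAne : A.Nonempty := ⟨0, hA0⟩
  have hAbdd : BddAbove A := ⟨1, fun s hs => hs.1.2⟩
  have hAclosed : IsClosed A := by
    have : A = Set.Icc (0 : ℝ) 1 ∩ (fun s : ℝ => s • c) ⁻¹' {x : E | x ≤ b} := rfl
    rw [this]
    exact isClosed_Icc.inter ((isClosed_le continuous_id continuous_const).preimage
      (continuous_id.smul continuous_const))
  set t := sSup A with ht
  have htA : t ∈ A := hAclosed.csSup_mem hAne hAbdd
  have ht0 : 0 ≤ t := htA.1.1
  have ht1 : t ≤ 1 := htA.1.2
  have htb : t • c ≤ b := htA.2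
  rcases eq_or_lt_of_le ht1 with h1 | h1
  · refine ⟨1, zero_le_one, le_refl _, ?_⟩
    rw [one_smul]
    have : c ≤ b := by rw [h1] at htb; rwa [one_smul] at htb
    exact le_antisymm hbc this
  · -- t < 1
    have hkey : ∀ ε : ℝ, 0 < ε → ε ≤ 1 - t → b ≤ (t + ε) • c := by
      intro ε hε hε1
      have hte0 : 0 ≤ t + ε := by linarith
      have hte1 : t + ε ≤ 1 := by linarith
      have hx0 : 0 ≤ (t + ε) • c := smul_nonneg hte0 hc
      have hxc : (t + ε) • c ≤ c := by
        have := scal_smul_le_smul hte1 hc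
        rwa [one_smul] at this
      rcases hch ((t + ε) • c) b hx0 hxc hb0 hbc with hle | hle
      · exfalso
        have : t + ε ∈ A := ⟨⟨hte0, hte1⟩, hle⟩
        have := le_csSup hAbdd this
        linarith
      · exact hle
    have hlim : Filter.Tendsto (fun k : ℕ => (t + (1 - t) / (k + 1)) • c)
        Filter.atTop (nhds (t • c)) := by
      have h1 : Filter.Tendsto (fun k : ℕ => t + (1 - t) / (k + 1)) Filter.atTop (nhds t) := by
        have := tendsto_one_div_add_atTop_nhds_zero_nat (𝕜 := ℝ)
        have h2 : Filter.Tendsto (fun k : ℕ => (1 - t) * (1 / (k + 1))) Filter.atTop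
            (nhds ((1 - t) * 0)) := this.const_mul (1 - t)
        rw [mul_zero] at h2
        have h3 : (fun k : ℕ => t + (1 - t) / (k + 1)) =
            fun k : ℕ => t + (1 - t) * (1 / (k + 1)) := by
          funext k; rw [mul_one_div]
        rw [h3]
        simpa using tendsto_const_nhds.add h2
      exact (h1.smul_const c)
    have hble : ∀ k : ℕ, b ≤ (t + (1 - t) / (k + 1)) • c := by
      intro k
      refine hkey _ (div_pos (by linarith) (by positivity)) ?_
      rw [div_le_iff₀ (by positivity : (0:ℝ) < (k:ℝ) + 1)]
      nlinarith [Nat.cast_nonneg (α := ℝ) k]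
    have : b ≤ t • c := ge_of_tendsto hlim (Filter.Eventually.of_forall hble)
    exact ⟨t, ht0, ht1, le_antisymm this htb⟩

variable (v : ℕ → E)

lemma single_inf_sum_zero (hv : ∀ n, 0 ≤ v n) (hd : ∀ m n, m ≠ n → v m ⊓ v n = 0)
    (c : ℝ) (hc : 0 ≤ c) (j : ℕ) (b : ℕ → ℝ) (hb : ∀ n, 0 ≤ b n)
    (G : Finset ℕ) (hG : ∀ n ∈ G, n = j → b n = 0 ∨ c = 0) :
    (c • v j) ⊓ (∑ n ∈ G, b n • v n) = 0 := by
  classical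
  induction G using Finset.induction with
  | empty =>
      simp only [Finset.sum_empty]
      exact inf_eq_right.mpr (smul_nonneg hc (hv j))
  | @insert a s ha ih =>
      have hsum0 : 0 ≤ ∑ n ∈ s, b n • v n :=
        Finset.sum_nonneg fun n _ => smul_nonneg (hb n) (hv n)
      have hs : (c • v j) ⊓ (∑ n ∈ s, b n • v n) = 0 :=
        ih fun n hn => hG n (Finset.mem_insert_of_mem hn)
      have hterm : (c • v j) ⊓ (b a • v a) = 0 := by
        by_cases haj : a = j
        · rcases hG a (Finset.mem_insert_self a s) haj with h | h
          · rw [h, zero_smul]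
            exact inf_eq_right.mpr (smul_nonneg hc (hv j))
          · rw [h, zero_smul]
            rw [inf_comm]
            exact inf_eq_right.mpr (smul_nonneg (hb a) (hv a))
        · exact smul_inf_zero hc (hb a) (hv j) (hv a) (hd j a fun hja => haj hja.symm)
      rw [Finset.sum_insert ha, inf_comm]
      rw [inf_comm] at hs hterm
      exact add_inf_zero (smul_nonneg (hb a) (hv a)) hsum0 (smul_nonneg hc (hv j)) hterm hs

lemma sum_inf_sum_zero (hv : ∀ n, 0 ≤ v n) (hd : ∀ m n, m ≠ n → v m ⊓ v n = 0)
    (F G : Finset ℕ) (b c : ℕ → ℝ) (hb : ∀ n, 0 ≤ b n) (hc : ∀ n, 0 ≤ c n)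
    (h : ∀ n, b n = 0 ∨ c n = 0) :
    (∑ n ∈ F, b n • v n) ⊓ (∑ n ∈ G, c n • v n) = 0 := by
  classical
  induction F using Finset.induction with
  | empty =>
      simp only [Finset.sum_empty]
      rw [inf_comm]
      exact inf_eq_right.mpr (Finset.sum_nonneg fun n _ => smul_nonneg (hc n) (hv n))
  | @insert a s ha ih =>
      have hsum0 : 0 ≤ ∑ n ∈ s, b n • v n :=
        Finset.sum_nonneg fun n _ => smul_nonneg (hb n) (hv n)
      have hterm : (b a • v a) ⊓ (∑ n ∈ G, c n • v n) = 0 := by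
        refine single_inf_sum_zero v hv hd (b a) (hb a) a c hc G fun n hn hna => ?_
        rcases h a with h' | h'
        · exact Or.inr h'
        · subst hna; exact Or.inl h'
      rw [Finset.sum_insert ha]
      exact add_inf_zero (smul_nonneg (hb a) (hv a)) hsum0
        (Finset.sum_nonneg fun n _ => smul_nonneg (hc n) (hv n)) hterm ih

lemma abs_sum_smul (hv : ∀ n, 0 ≤ v n) (hd : ∀ m n, m ≠ n → v m ⊓ v n = 0)
    (F : Finset ℕ) (a : ℕ → ℝ) :
    |∑ n ∈ F, a n • v n| = ∑ n ∈ F, |a n| • v n := by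
  classical
  set p := ∑ n ∈ F, (a n)⁺ • v n with hp
  set q := ∑ n ∈ F, (a n)⁻ • v n with hq
  have hp0 : 0 ≤ p := Finset.sum_nonneg fun n _ => smul_nonneg (posPart_nonneg _) (hv n)
  have hq0 : 0 ≤ q := Finset.sum_nonneg fun n _ => smul_nonneg (negPart_nonneg _) (hv n)
  have hpq : p ⊓ q = 0 := by
    refine sum_inf_sum_zero v hv hd F F _ _ (fun n => posPart_nonneg _)
      (fun n => negPart_nonneg _) fun n => ?_
    rcases le_total 0 (a n) with h' | h'
    · exact Or.inr (negPart_eq_zero.mpr h')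
    · exact Or.inl (posPart_eq_zero.mpr h')
  have hdiff : ∑ n ∈ F, a n • v n = p - q := by
    rw [hp, hq, ← Finset.sum_sub_distrib]
    refine Finset.sum_congr rfl fun n _ => ?_
    rw [← sub_smul, posPart_sub_negPart]
  have habs : ∑ n ∈ F, |a n| • v n = p + q := by
    rw [hp, hq, ← Finset.sum_add_distrib]
    refine Finset.sum_congr rfl fun n _ => ?_
    rw [← add_smul, posPart_add_negPart]
  rw [hdiff, habs, abs_sub_of_disjoint hpq]

end ChainAndSums
section Baire

open ZeroAtInftyContinuousMap

variable {E : Type*} [NormedAddCommGroup E] [Lattice E] [HasSolidNorm E] [IsOrderedAddMonoid E]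
  [NormedSpace ℝ E] [PosSMulStrictMono ℝ E]

lemma uniform_bound (o : C₀(ℕ, ℝ) ≃o E) (h0 : o 0 = 0) :
    ∃ δ : ℝ, 0 < δ ∧ ∃ m : ℝ, 0 ≤ m ∧ ∀ (F : Finset ℕ) (t : ℕ → ℝ),
      (∀ n, 0 ≤ t n) → (∀ n, t n ≤ δ) → ‖o (∑ n ∈ F, t n • c0unit n)‖ ≤ m := by
  classical
  set P := {g : C₀(ℕ, ℝ) | 0 ≤ g} with hP
  haveI : CompleteSpace P := c0_isClosed_nonneg.completeSpace_coe
  haveI : Nonempty P := ⟨⟨0, by simp only [hP, Set.mem_setOf_eq]; exact le_refl 0⟩⟩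
  haveI : BaireSpace P := BaireSpace.of_completelyPseudoMetrizable
  set D : ℕ → Set P := fun m => closure {x : P | ‖o x.1‖ ≤ m} with hD
  have hcover : ⋃ m, D m = Set.univ := by
    refine Set.eq_univ_of_forall fun x => ?_
    refine Set.mem_iUnion.mpr ⟨⌈‖o x.1‖⌉₊, subset_closure ?_⟩
    exact Set.mem_setOf_eq ▸ Nat.le_ceil _
  obtain ⟨m, hm⟩ := nonempty_interior_of_iUnion_of_closed (fun m => isClosed_closure) hcover
  obtain ⟨x₀, hx₀⟩ := hm
  obtain ⟨ε, hε, hball⟩ := Metric.mem_nhds_iff.mp (mem_interior_iff_mem_nhds.mp hx₀)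
  set δ := ε / 4 with hδ
  have hδpos : 0 < δ := by positivity
  refine ⟨δ, hδpos, (m : ℝ), Nat.cast_nonneg m, fun F t ht0 htδ => ?_⟩
  set g₀ := (x₀ : C₀(ℕ, ℝ)) with hg₀
  have hg₀0 : 0 ≤ g₀ := x₀.2
  set f : C₀(ℕ, ℝ) := ∑ n ∈ F, t n • c0unit n with hf
  set ftil : C₀(ℕ, ℝ) := ∑ n ∈ F, (fun k => t k + δ) n • c0unit n with hftil
  have hftil_apply : ∀ k, ftil k = if k ∈ F then t k + δ else 0 := fun k =>
    c0_sum_apply F _ k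
  have hf_apply : ∀ k, f k = if k ∈ F then t k else 0 := fun k => c0_sum_apply F _ k
  have hftil_nonneg : ∀ k, 0 ≤ ftil k := by
    intro k; rw [hftil_apply k]
    split
    · have := ht0 k; linarith
    · exact le_refl 0
  have hftil_le : ∀ k, ftil k ≤ 2 * δ := by
    intro k; rw [hftil_apply k]
    split
    · have := htδ k; linarith
    · linarith
  set p : C₀(ℕ, ℝ) := g₀ ⊔ ftil with hp
  have hp0 : 0 ≤ p := le_trans hg₀0 le_sup_left
  have hpg : ∀ k, p k = g₀ k ⊔ ftil k := fun k => c0_sup_apply g₀ ftil k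
  have hdist : dist (⟨p, hp0⟩ : P) x₀ < ε := by
    have : dist (⟨p, hp0⟩ : P) x₀ = ‖p - g₀‖ := by
      rw [Subtype.dist_eq, dist_eq_norm]
    rw [this]
    have hb : ‖p - g₀‖ ≤ 2 * δ := by
      refine c0_norm_le _ _ (by linarith) fun k => ?_
      have h1 : (p - g₀) k = p k - g₀ k := by simp
      rw [h1, hpg k]
      have h2 : 0 ≤ g₀ k := hg₀0 k
      have h3 := hftil_nonneg k
      have h4 := hftil_le k
      rcases le_total (ftil k) (g₀ k) with h5 | h5
      · rw [sup_eq_left.mpr h5]; simp; linarith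
      · rw [sup_eq_right.mpr h5, abs_of_nonneg (by linarith)]; linarith
    calc ‖p - g₀‖ ≤ 2 * δ := hb
      _ < ε := by rw [hδ]; linarith
  have hmem : (⟨p, hp0⟩ : P) ∈ D m := hball (Metric.mem_ball.mpr hdist)
  obtain ⟨d, hd_mem, hpd⟩ := Metric.mem_closure_iff.mp hmem δ hδpos
  have hd_norm : ‖o d.1‖ ≤ (m : ℝ) := hd_mem
  have hd0 : 0 ≤ d.1 := d.2
  have hpd' : ‖p - d.1‖ < δ := by
    rw [← dist_eq_norm, ← Subtype.dist_eq (⟨p, hp0⟩ : P) d]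
    exact hpd
  have hfd : f ≤ d.1 := by
    refine (c0_le_iff _ _).mpr fun k => ?_
    rw [hf_apply k]
    by_cases hk : k ∈ F
    · simp only [hk, if_true]
      have h1 : |p k - d.1 k| ≤ ‖p - d.1‖ := by
        have : p k - d.1 k = (p - d.1) k := by simp
        rw [this]; exact c0_abs_apply_le_norm _ k
      have h2 : p k ≥ t k + δ := by
        rw [hpg k, hftil_apply k]
        simp only [hk, if_true]
        exact le_sup_right
      have := abs_le.mp (le_of_lt (lt_of_le_of_lt h1 hpd'))
      linarith [this.1]
    · simp only [hk, if_false]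
      exact hd0 k
  have hf0 : 0 ≤ f := by
    refine (c0_le_iff _ _).mpr fun k => ?_
    have h00 : (0 : C₀(ℕ, ℝ)) k = 0 := rfl
    rw [h00, hf_apply k]
    split
    · exact ht0 k
    · exact le_refl 0
  have h1 : 0 ≤ o f := by
    have := o.monotone hf0
    rwa [h0] at this
  have h2 : o f ≤ o d.1 := o.monotone hfd
  have h3 : 0 ≤ o d.1 := le_trans h1 h2
  have : |o f| ≤ |o d.1| := by
    rw [abs_of_nonneg h1, abs_of_nonneg h3]
    exact h2
  exact le_trans (norm_le_norm_of_abs_le_abs this) hd_norm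

end Baire
section OrderIsoHelpers

open ZeroAtInftyContinuousMap

variable {E : Type*} [NormedAddCommGroup E] [Lattice E] [HasSolidNorm E] [IsOrderedAddMonoid E]
  [NormedSpace ℝ E] [PosSMulStrictMono ℝ E]

lemma oiso_symm_zero (o : C₀(ℕ, ℝ) ≃o E) (h0 : o 0 = 0) : o.symm 0 = 0 := by
  rw [← h0, o.symm_apply_apply]

lemma oiso_nonneg (o : C₀(ℕ, ℝ) ≃o E) (h0 : o 0 = 0) {g : C₀(ℕ, ℝ)} (hg : 0 ≤ g) :
    0 ≤ o g := by
  have := o.monotone hg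
  rwa [h0] at this

lemma oiso_symm_nonneg (o : C₀(ℕ, ℝ) ≃o E) (h0 : o 0 = 0) {y : E} (hy : 0 ≤ y) :
    0 ≤ o.symm y := by
  have := o.symm.monotone hy
  rwa [show o.symm 0 = 0 from oiso_symm_zero o h0] at this

lemma oiso_inf_zero (o : C₀(ℕ, ℝ) ≃o E) (h0 : o 0 = 0) {f g : C₀(ℕ, ℝ)} (h : f ⊓ g = 0) :
    o f ⊓ o g = 0 := by
  rw [← o.map_inf, h, h0]

/-- Coordinates of scalar multiples of unit vectors. -/
lemma c0_smul_unit_apply (t : ℝ) (n k : ℕ) :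
    (t • c0unit n) k = if k = n then t else 0 := by
  simp only [ZeroAtInftyContinuousMap.coe_smul, Pi.smul_apply, c0unit_apply, smul_eq_mul]
  split <;> simp

lemma c0_unit_inf_sum (a : ℕ) (s : Finset ℕ) (ha : a ∉ s) (t : ℕ → ℝ) (ht : ∀ n, 0 ≤ t n) :
    (t a • c0unit a) ⊓ (∑ n ∈ s, t n • c0unit n) = 0 := by
  apply DFunLike.ext
  intro k
  have h1 : ((t a • c0unit a) ⊓ (∑ n ∈ s, t n • c0unit n)) k
      = (t a • c0unit a) k ⊓ (∑ n ∈ s, t n • c0unit n) k := rfl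
  rw [h1, c0_smul_unit_apply, c0_sum_apply]
  have h0 : (0 : C₀(ℕ, ℝ)) k = 0 := rfl
  rw [h0]
  by_cases hk : k = a
  · subst hk
    simp only [if_pos rfl, if_neg ha]
    exact inf_eq_right.mpr (ht k)
  · simp only [if_neg hk]
    by_cases hks : k ∈ s
    · simp only [if_pos hks]
      exact min_eq_left (ht k)
    · simp only [if_neg hks]
      exact min_self 0

lemma c0_unit_sum_add_eq_sup (a : ℕ) (s : Finset ℕ) (ha : a ∉ s) (t : ℕ → ℝ)
    (ht : ∀ n, 0 ≤ t n) :
    (t a • c0unit a) + (∑ n ∈ s, t n • c0unit n)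
      = (t a • c0unit a) ⊔ (∑ n ∈ s, t n • c0unit n) := by
  apply DFunLike.ext
  intro k
  have h1 : ((t a • c0unit a) + (∑ n ∈ s, t n • c0unit n)) k
      = (t a • c0unit a) k + (∑ n ∈ s, t n • c0unit n) k := by simp
  have h2 : ((t a • c0unit a) ⊔ (∑ n ∈ s, t n • c0unit n)) k
      = (t a • c0unit a) k ⊔ (∑ n ∈ s, t n • c0unit n) k := rfl
  rw [h1, h2, c0_smul_unit_apply, c0_sum_apply]
  by_cases hk : k = a
  · subst hk
    simp only [if_pos rfl, if_neg ha, if_true, eq_self_iff_true]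
    rw [add_zero]
    exact (sup_eq_left.mpr (ht k)).symm
  · simp only [if_neg hk]
    by_cases hks : k ∈ s
    · simp only [if_pos hks]
      rw [zero_add, sup_eq_right.mpr (ht k)]
    · simp only [if_neg hks]
      simp

lemma oiso_map_sum (o : C₀(ℕ, ℝ) ≃o E) (h0 : o 0 = 0) (t : ℕ → ℝ) (ht : ∀ n, 0 ≤ t n)
    (F : Finset ℕ) :
    o (∑ n ∈ F, t n • c0unit n) = ∑ n ∈ F, o (t n • c0unit n) := by
  classical
  induction F using Finset.induction with
  | empty => simpa using h0
  | @insert a s ha ih =>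
      rw [Finset.sum_insert ha, Finset.sum_insert ha, ← ih]
      rw [c0_unit_sum_add_eq_sup a s ha t ht, o.map_sup]
      exact sup_eq_add_of_disjoint (oiso_inf_zero o h0 (c0_unit_inf_sum a s ha t ht))

lemma oiso_chain (o : C₀(ℕ, ℝ) ≃o E) (h0 : o 0 = 0) (u : ℝ) (n : ℕ) :
    ∀ x y : E, 0 ≤ x → x ≤ o (u • c0unit n) → 0 ≤ y → y ≤ o (u • c0unit n) →
      x ≤ y ∨ y ≤ x := by
  intro x y hx0 hxc hy0 hyc
  set x' := o.symm x with hx'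
  set y' := o.symm y with hy'
  have hox : o x' = x := o.apply_symm_apply x
  have hoy : o y' = y := o.apply_symm_apply y
  have hx'0 : 0 ≤ x' := oiso_symm_nonneg o h0 hx0
  have hy'0 : 0 ≤ y' := oiso_symm_nonneg o h0 hy0
  have hx'c : x' ≤ u • c0unit n := by
    have := o.symm.monotone hxc
    rwa [o.symm_apply_apply] at this
  have hy'c : y' ≤ u • c0unit n := by
    have := o.symm.monotone hyc
    rwa [o.symm_apply_apply] at this
  have hzero : ∀ (z : C₀(ℕ, ℝ)), 0 ≤ z → z ≤ u • c0unit n → ∀ k, k ≠ n → z k = 0 := by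
    intro z hz0 hzc k hk
    have h1 : 0 ≤ z k := hz0 k
    have h2 : z k ≤ (u • c0unit n) k := hzc k
    rw [c0_smul_unit_apply, if_neg hk] at h2
    linarith
  rcases le_total (x' n) (y' n) with h | h
  · left
    rw [← hox, ← hoy]
    apply o.monotone
    refine (c0_le_iff _ _).mpr fun k => ?_
    by_cases hk : k = n
    · subst hk; exact h
    · rw [hzero x' hx'0 hx'c k hk, hzero y' hy'0 hy'c k hk]
  · right
    rw [← hox, ← hoy]
    apply o.monotone
    refine (c0_le_iff _ _).mpr fun k => ?_
    by_cases hk : k = n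
    · subst hk; exact h
    · rw [hzero x' hx'0 hx'c k hk, hzero y' hy'0 hy'c k hk]

lemma c0_smul_unit_ne_zero {t : ℝ} (ht : t ≠ 0) (n : ℕ) : t • c0unit n ≠ 0 := by
  intro h
  have := congrArg (fun f : C₀(ℕ, ℝ) => f n) h
  simp only [c0_smul_unit_apply, if_pos rfl] at this
  exact ht this

lemma oiso_ray (o : C₀(ℕ, ℝ) ≃o E) (h0 : o 0 = 0) {δ : ℝ} (hδ : 0 < δ) (s : ℝ) (hs : 0 ≤ s)
    (n : ℕ) : ∃ r : ℝ, 0 ≤ r ∧ o (s • c0unit n) = r • o (δ • c0unit n) := by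
  have hmono : ∀ a b : ℝ, a ≤ b → o (a • c0unit n) ≤ o (b • c0unit n) := by
    intro a b hab
    apply o.monotone
    refine (c0_le_iff _ _).mpr fun k => ?_
    rw [c0_smul_unit_apply, c0_smul_unit_apply]
    split
    · exact hab
    · exact le_refl 0
  have hnn : ∀ a : ℝ, 0 ≤ a → 0 ≤ o (a • c0unit n) := by
    intro a ha
    have := hmono 0 a ha
    rwa [zero_smul, h0] at this
  rcases le_total s δ with hcase | hcase
  · obtain ⟨r, hr0, _, hrr⟩ := exists_smul_of_interval_chain (o (δ • c0unit n))
      (o (s • c0unit n)) (hnn δ hδ.le) (hnn s hs) (hmono s δ hcase) (oiso_chain o h0 δ n)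
    exact ⟨r, hr0, hrr⟩
  · obtain ⟨r, hr0, _, hrr⟩ := exists_smul_of_interval_chain (o (s • c0unit n))
      (o (δ • c0unit n)) (hnn s hs) (hnn δ hδ.le) (hmono δ s hcase) (oiso_chain o h0 s n)
    have hrne : r ≠ 0 := by
      intro h
      rw [h, zero_smul] at hrr
      have : δ • c0unit n = 0 := o.injective (by rw [hrr, h0])
      exact c0_smul_unit_ne_zero hδ.ne' n this
    refine ⟨r⁻¹, inv_nonneg.mpr hr0, ?_⟩
    rw [hrr, smul_smul, inv_mul_cancel₀ hrne, one_smul]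

end OrderIsoHelpers
section KeyLemma

open ZeroAtInftyContinuousMap

variable {E : Type*} [NormedAddCommGroup E] [Lattice E] [HasSolidNorm E] [IsOrderedAddMonoid E]
  [NormedSpace ℝ E] [PosSMulStrictMono ℝ E]
  [CompleteSpace E]

lemma c0_unit_smul_inf {a b : ℕ} (hab : a ≠ b) {s t : ℝ} (hs : 0 ≤ s) (ht : 0 ≤ t) :
    (s • c0unit a) ⊓ (t • c0unit b) = 0 := by
  apply DFunLike.ext
  intro k
  have h1 : ((s • c0unit a) ⊓ (t • c0unit b)) k = (s • c0unit a) k ⊓ (t • c0unit b) k := rfl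
  have h0 : (0 : C₀(ℕ, ℝ)) k = 0 := rfl
  rw [h1, h0, c0_smul_unit_apply, c0_smul_unit_apply]
  by_cases hk : k = a
  · subst hk
    rw [if_pos rfl, if_neg (fun h => hab h)]
    exact inf_eq_right.mpr hs
  · rw [if_neg hk]
    by_cases hkb : k = b
    · rw [if_pos hkb]
      exact inf_eq_left.mpr ht
    · rw [if_neg hkb]
      exact inf_idem 0

lemma continuous_abs_E : Continuous (fun x : E => |x|) := by
  have : (fun x : E => |x|) = fun x => x ⊔ -x := by funext x; rfl
  rw [this]
  exact continuous_id.sup continuous_neg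

lemma key_lemma (o : C₀(ℕ, ℝ) ≃o E) (h0 : o 0 = 0) :
    ∃ S : C₀(ℕ, ℝ) ≃ₗ[ℝ] E, ∀ f : C₀(ℕ, ℝ), S |f| = |S f| := by
  classical
  obtain ⟨δ, hδpos, m, hm0, hUB⟩ := uniform_bound o h0
  set v : ℕ → E := fun n => o (δ • c0unit n) with hv
  have hunit_nonneg : ∀ (t : ℝ), 0 ≤ t → ∀ n, (0 : C₀(ℕ, ℝ)) ≤ t • c0unit n := by
    intro t ht n
    refine (c0_le_iff _ _).mpr fun k => ?_
    have h00 : (0 : C₀(ℕ, ℝ)) k = 0 := rfl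
    rw [h00, c0_smul_unit_apply]
    split
    · exact ht
    · exact le_refl 0
  have hv0 : ∀ n, 0 ≤ v n := fun n => oiso_nonneg o h0 (hunit_nonneg δ hδpos.le n)
  have hvne : ∀ n, v n ≠ 0 := by
    intro n h
    exact c0_smul_unit_ne_zero hδpos.ne' n (o.injective (h.trans h0.symm))
  have hvd : ∀ a b, a ≠ b → v a ⊓ v b = 0 := fun a b hab =>
    oiso_inf_zero o h0 (c0_unit_smul_inf hab hδpos.le hδpos.le)
  -- norm bound for finite combinations
  have hnormsum : ∀ F : Finset ℕ, ‖∑ n ∈ F, v n‖ ≤ m := by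
    intro F
    have := oiso_map_sum o h0 (fun _ => δ) (fun _ => hδpos.le) F
    rw [← this]
    exact hUB F (fun _ => δ) (fun _ => hδpos.le) (fun _ => le_refl δ)
  have hbound : ∀ (F : Finset ℕ) (a : ℕ → ℝ) (C : ℝ), 0 ≤ C → (∀ n ∈ F, |a n| ≤ C) →
      ‖∑ n ∈ F, a n • v n‖ ≤ C * m := by
    intro F a C hC ha
    have h1 : |∑ n ∈ F, a n • v n| = ∑ n ∈ F, |a n| • v n := abs_sum_smul v hv0 hvd F a
    have h2 : ∑ n ∈ F, |a n| • v n ≤ C • (∑ n ∈ F, v n) := by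
      rw [Finset.smul_sum]
      exact Finset.sum_le_sum fun n hn => scal_smul_le_smul (ha n hn) (hv0 n)
    have hsv0 : 0 ≤ ∑ n ∈ F, v n := Finset.sum_nonneg fun n _ => hv0 n
    have h3 : |∑ n ∈ F, a n • v n| ≤ |C • ∑ n ∈ F, v n| := by
      rw [abs_of_nonneg (smul_nonneg hC hsv0), h1]
      exact h2
    calc ‖∑ n ∈ F, a n • v n‖ ≤ ‖C • ∑ n ∈ F, v n‖ := norm_le_norm_of_abs_le_abs h3
      _ = |C| * ‖∑ n ∈ F, v n‖ := by rw [norm_smul, Real.norm_eq_abs]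
      _ ≤ C * m := by
          rw [abs_of_nonneg hC]
          exact mul_le_mul_of_nonneg_left (hnormsum F) hC
  -- summability
  have hsummable : ∀ f : C₀(ℕ, ℝ), Summable (fun n => f n • v n) := by
    intro f
    rw [summable_iff_vanishing]
    intro e he
    obtain ⟨ε, hε, hball⟩ := Metric.mem_nhds_iff.mp he
    set C := ε / (2 * (m + 1)) with hC
    have hCpos : 0 < C := by positivity
    obtain ⟨N, hN⟩ := Metric.tendsto_atTop.mp (c0_tendsto f) C hCpos
    refine ⟨Finset.range N, fun t ht => ?_⟩
    have hbt : ‖∑ n ∈ t, f n • v n‖ ≤ C * m := by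
      refine hbound t (fun n => f n) C hCpos.le fun n hn => ?_
      have hnN : N ≤ n := by
        by_contra hlt
        push_neg at hlt
        exact (Finset.disjoint_left.mp ht hn) (Finset.mem_range.mpr hlt)
      have := hN n hnN
      rw [Real.dist_eq, sub_zero] at this
      exact this.le
    apply hball
    rw [Metric.mem_ball, dist_zero_right]
    calc ‖∑ n ∈ t, f n • v n‖ ≤ C * m := hbt
      _ < ε := by
          rw [hC]
          rw [div_mul_eq_mul_div, div_lt_iff₀ (by positivity : (0:ℝ) < 2 * (m + 1))]
          nlinarith
  set S0 : C₀(ℕ, ℝ) → E := fun f => ∑' n, f n • v n with hS0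
  -- lattice property
  have habs0 : ∀ f : C₀(ℕ, ℝ), S0 |f| = |S0 f| := by
    intro f
    have h1 : HasSum (fun n => f n • v n) (S0 f) := (hsummable f).hasSum
    have h2 : HasSum (fun n => |f n| • v n) (S0 |f|) := (hsummable |f|).hasSum
    have t1 := h1.tendsto_sum_nat
    have t2 := h2.tendsto_sum_nat
    have t3 : Filter.Tendsto (fun N => |∑ n ∈ Finset.range N, f n • v n|)
        Filter.atTop (nhds (|S0 f|)) := (continuous_abs_E.tendsto _).comp t1
    have t4 : (fun N => |∑ n ∈ Finset.range N, f n • v n|)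
        = fun N => ∑ n ∈ Finset.range N, |f n| • v n := by
      funext N
      exact abs_sum_smul v hv0 hvd (Finset.range N) (fun n => f n)
    rw [t4] at t3
    exact tendsto_nhds_unique t2 t3
  -- linearity
  have hadd : ∀ f g : C₀(ℕ, ℝ), S0 (f + g) = S0 f + S0 g := by
    intro f g
    have h1 : (fun n => (f + g) n • v n) = fun n => f n • v n + g n • v n := by
      funext n
      have : (f + g) n = f n + g n := by simp
      rw [this, add_smul]
    rw [hS0]
    simp only []
    rw [h1]
    exact Summable.tsum_add (hsummable f) (hsummable g)
  have hsmul : ∀ (c : ℝ) (f : C₀(ℕ, ℝ)), S0 (c • f) = c • S0 f := by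
    intro c f
    have h1 : (fun n => (c • f) n • v n) = fun n => c • (f n • v n) := by
      funext n
      have : (c • f) n = c * f n := by simp
      rw [this, mul_smul]
    rw [hS0]
    simp only []
    rw [h1]
    exact Summable.tsum_const_smul c (hsummable f)
  set Slin : C₀(ℕ, ℝ) →ₗ[ℝ] E :=
    { toFun := S0
      map_add' := hadd
      map_smul' := hsmul } with hSlin
  -- injectivity
  have hker : ∀ f : C₀(ℕ, ℝ), S0 f = 0 → f = 0 := by
    intro f hf
    have h1 : S0 |f| = 0 := by rw [habs0 f, hf, abs_zero]
    apply DFunLike.ext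
    intro k
    have h2 : |f k| • v k ≤ ∑' n, |f n| • v n :=
      Summable.le_tsum (hsummable |f|) k fun n _ => smul_nonneg (abs_nonneg _) (hv0 n)
    have h3 : (∑' n, |f n| • v n) = S0 |f| := rfl
    rw [h3, h1] at h2
    have h4 : |f k| • v k = 0 :=
      le_antisymm h2 (smul_nonneg (abs_nonneg _) (hv0 k))
    rcases smul_eq_zero.mp h4 with h5 | h5
    · have h00 : (0 : C₀(ℕ, ℝ)) k = 0 := rfl
      rw [h00]
      exact abs_eq_zero.mp h5
    · exact absurd h5 (hvne k)
  have hinj : Function.Injective Slin := by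
    intro a b hab
    have : Slin (a - b) = 0 := by rw [map_sub, hab, sub_self]
    have h1 : a - b = 0 := hker (a - b) this
    exact sub_eq_zero.mp h1
  -- surjectivity on the positive cone
  have hsurjpos : ∀ y : E, 0 ≤ y → ∃ f : C₀(ℕ, ℝ), S0 f = y := by
    intro y hy
    set g := o.symm y with hg
    have hg0 : 0 ≤ g := oiso_symm_nonneg o h0 hy
    have hg0' : ∀ n, 0 ≤ g n := (c0_nonneg_iff g).mp hg0
    have hogy : o g = y := o.apply_symm_apply y
    choose r hr0 hrv using fun n => oiso_ray o h0 hδpos (g n) (hg0' n) n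
    have hgne : ∀ n, g n • c0unit n ≤ g := by
      intro n
      refine (c0_le_iff _ _).mpr fun k => ?_
      rw [c0_smul_unit_apply]
      by_cases hk : k = n
      · subst hk; rw [if_pos rfl]
      · rw [if_neg hk]; exact hg0' k
    have hoy : ∀ n, o (g n • c0unit n) ≤ y := by
      intro n
      have := o.monotone (hgne n)
      rwa [hogy] at this
    have htend : Filter.Tendsto r Filter.atTop (nhds 0) := by
      by_contra hc
      rw [Metric.tendsto_atTop] at hc
      push_neg at hc
      obtain ⟨θ, hθ, hfreq⟩ := hc
      set G := o.symm (θ⁻¹ • y) with hG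
      obtain ⟨N₀, hN₀⟩ := Metric.tendsto_atTop.mp (c0_tendsto G) δ hδpos
      obtain ⟨n, hnN, hd⟩ := hfreq N₀
      have hrn : θ ≤ r n := by
        rw [Real.dist_eq, sub_zero, abs_of_nonneg (hr0 n)] at hd
        exact hd
      have h1 : θ • v n ≤ y := by
        calc θ • v n ≤ r n • v n := scal_smul_le_smul hrn (hv0 n)
          _ = o (g n • c0unit n) := (hrv n).symm
          _ ≤ y := hoy n
      have h2 : v n ≤ θ⁻¹ • y := by
        have h3 : θ⁻¹ • (θ • v n) ≤ θ⁻¹ • y :=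
          smul_le_smul_of_nonneg_left h1 (inv_nonneg.mpr hθ.le)
        rwa [smul_smul, inv_mul_cancel₀ hθ.ne', one_smul] at h3
      have h4 : δ • c0unit n ≤ G := by
        have h5 := o.symm.monotone h2
        rwa [show o.symm (v n) = δ • c0unit n from o.symm_apply_apply _] at h5
      have h6 : δ ≤ G n := by
        have := (c0_le_iff _ _).mp h4 n
        rwa [c0_smul_unit_apply, if_pos rfl] at this
      have h7 := hN₀ n hnN
      rw [Real.dist_eq, sub_zero] at h7
      have h8 : G n ≤ |G n| := le_abs_self _
      linarith
    set f := c0mk r htend with hf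
    have hterm : (fun n => f n • v n) = fun n => o (g n • c0unit n) := by
      funext n
      rw [show f n = r n from rfl, hrv n]
    have hpartial : ∀ N : ℕ, ∑ n ∈ Finset.range N, f n • v n
        = o (∑ n ∈ Finset.range N, g n • c0unit n) := by
      intro N
      have h1 : ∑ n ∈ Finset.range N, f n • v n
          = ∑ n ∈ Finset.range N, o (g n • c0unit n) := by
        refine Finset.sum_congr rfl fun n _ => ?_
        rw [show f n = r n from rfl, hrv n]
      rw [h1, ← oiso_map_sum o h0 (fun k => g k) hg0' (Finset.range N)]
    have hPle : ∀ N : ℕ, o (∑ n ∈ Finset.range N, g n • c0unit n) ≤ y := by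
      intro N
      have h1 : (∑ n ∈ Finset.range N, g n • c0unit n) ≤ g := by
        refine (c0_le_iff _ _).mpr fun k => ?_
        rw [c0_sum_apply]
        split
        · exact le_refl _
        · exact hg0' k
      have := o.monotone h1
      rwa [hogy] at this
    have hsumf : HasSum (fun n => f n • v n) (S0 f) := (hsummable f).hasSum
    have h1 : S0 f ≤ y :=
      le_of_tendsto hsumf.tendsto_sum_nat
        (Filter.Eventually.of_forall fun N => by rw [hpartial N]; exact hPle N)
    have h2 : y ≤ S0 f := by
      have hm2 : ∀ N : ℕ, ∑ n ∈ Finset.range N, f n • v n ≤ S0 f := fun N =>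
        Summable.sum_le_tsum _ (fun n _ => smul_nonneg (hr0 n) (hv0 n)) (hsummable f)
      have hm3 : ∀ N : ℕ, (∑ n ∈ Finset.range N, g n • c0unit n) ≤ o.symm (S0 f) := by
        intro N
        have := o.symm.monotone (le_of_eq_of_le (hpartial N).symm (hm2 N))
        rwa [o.symm_apply_apply] at this
      have hm4 : g ≤ o.symm (S0 f) := by
        refine (c0_le_iff _ _).mpr fun k => ?_
        have := (c0_le_iff _ _).mp (hm3 (k + 1)) k
        rwa [c0_sum_apply, if_pos (Finset.mem_range.mpr (Nat.lt_succ_self k))] at this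
      have := o.monotone hm4
      rwa [hogy, o.apply_symm_apply] at this
    exact ⟨f, le_antisymm h1 h2⟩
  have hsurj : Function.Surjective Slin := by
    intro y
    obtain ⟨f1, hf1⟩ := hsurjpos y⁺ (posPart_nonneg y)
    obtain ⟨f2, hf2⟩ := hsurjpos y⁻ (negPart_nonneg y)
    refine ⟨f1 - f2, ?_⟩
    have : Slin (f1 - f2) = Slin f1 - Slin f2 := map_sub Slin f1 f2
    rw [this]
    have e1 : Slin f1 = S0 f1 := rfl
    have e2 : Slin f2 = S0 f2 := rfl
    rw [e1, e2, hf1, hf2, posPart_sub_negPart]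
  refine ⟨LinearEquiv.ofBijective Slin ⟨hinj, hsurj⟩, fun f => ?_⟩
  exact habs0 f

end KeyLemma
/-- If a Banach lattice `E` is (possibly nonlinearly) order isomorphic to
`c₀`, then `E` is lattice isomorphic to `c₀`: there is a linear bijection `S : c₀ → E`
with `S |x| = |S x|` for all `x`. -/
theorem stmt3 (E : Type*) [NormedAddCommGroup E] [Lattice E] [HasSolidNorm E] [IsOrderedAddMonoid E]
    [NormedSpace ℝ E] [PosSMulStrictMono ℝ E]
    [CompleteSpace E]
    (T : C₀(ℕ, ℝ) → E) (hbij : Function.Bijective T)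
    (hord : ∀ f g : C₀(ℕ, ℝ), f ≤ g ↔ T f ≤ T g) :
    ∃ S : C₀(ℕ, ℝ) ≃ₗ[ℝ] E, ∀ f : C₀(ℕ, ℝ), S |f| = |S f| := by
  classical
  set T₁ : C₀(ℕ, ℝ) → E := fun f => T f - T 0 with hT₁
  have hbij₁ : Function.Bijective T₁ := by
    constructor
    · intro a b hab
      apply hbij.1
      have h : T a - T 0 = T b - T 0 := hab
      exact sub_left_inj.mp h
    · intro y
      obtain ⟨f, hf⟩ := hbij.2 (y + T 0)
      refine ⟨f, ?_⟩
      rw [hT₁]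
      simp only []
      rw [hf]
      abel
  have hord₁ : ∀ f g : C₀(ℕ, ℝ), f ≤ g ↔ T₁ f ≤ T₁ g := by
    intro f g
    rw [hord f g, hT₁]
    simp only []
    rw [sub_le_sub_iff_right]
  set o : C₀(ℕ, ℝ) ≃o E :=
    { toEquiv := Equiv.ofBijective T₁ hbij₁
      map_rel_iff' := by
        intro f g
        exact (hord₁ f g).symm } with ho
  have h0 : o 0 = 0 := by
    show T₁ 0 = 0
    rw [hT₁]
    simp
  exact key_lemma o h0
end

section
/- Let E be a Banach lattice and let T : c₀ → E be an order isomorphism with T0 = 0. Denote by (eₙ) the unit vector basis of c₀ and set xₙ = Teₙ. Then (xₙ) is a disjoint sequence of positive elements of E, and for each n ∈ ℕ and every a ≥ 0 there exists b ≥ 0 such that T(a·eₙ) = b·xₙ. -/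
open Filter Topology ZeroAtInfty

section Aux

open Filter Topology

/-- Key lemma: in a normed lattice ordered ℝ-module, if `[0, z]` is a chain and
`0 ≤ u ≤ v ≤ z`, then `u` is a nonnegative multiple of `v`. -/
lemma aux_chain_smul {E : Type*} [NormedAddCommGroup E] [Lattice E] [IsOrderedAddMonoid E]
    [HasSolidNorm E] [NormedSpace ℝ E] [PosSMulStrictMono ℝ E] (z v u : E) (hu0 : 0 ≤ u) (huv : u ≤ v) (hvz : v ≤ z)
    (hchain : ∀ p q : E, 0 ≤ p → p ≤ z → 0 ≤ q → q ≤ z → p ≤ q ∨ q ≤ p) :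
    ∃ s : ℝ, 0 ≤ s ∧ u = s • v := by
  have hv0 : 0 ≤ v := le_trans hu0 huv
  by_cases hu : u = 0
  · exact ⟨0, le_refl 0, by simp [hu]⟩
  set S : Set ℝ := Set.Icc (0:ℝ) 1 ∩ {s | s • v ≤ u} with hS
  have hS0 : (0:ℝ) ∈ S := ⟨⟨le_refl 0, zero_le_one⟩, by simpa using hu0⟩
  have hcpt : IsCompact S :=
    isCompact_Icc.inter_right
      ((isClosed_Iic (a := u)).preimage (continuous_id.smul continuous_const))
  have hbmem : sSup S ∈ S := hcpt.sSup_mem ⟨0, hS0⟩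
  set s := sSup S with hs
  obtain ⟨⟨hb0, hb1⟩, hbu⟩ := hbmem
  refine ⟨s, hb0, ?_⟩
  have hw0 : 0 ≤ u - s • v := sub_nonneg.2 hbu
  have hwz : u - s • v ≤ z :=
    le_trans (le_trans (sub_le_self u (smul_nonneg hb0 hv0)) huv) hvz
  have key : ∀ t : ℝ, 0 < t → t ≤ 1 → u - s • v ≤ t • v := by
    intro t ht0 ht1
    have htv0 : 0 ≤ t • v := smul_nonneg ht0.le hv0
    have htvv : t • v ≤ v := by
      have h1 : t • v ≤ (1:ℝ) • v := by
        rw [← sub_nonneg, ← sub_smul]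
        exact smul_nonneg (by linarith) hv0
      rwa [one_smul] at h1
    rcases hchain (u - s • v) (t • v) hw0 hwz htv0 (le_trans htvv hvz) with h | h
    · exact h
    · exfalso
      have hbt : (s + t) • v ≤ u := by
        rw [add_smul]
        calc s • v + t • v ≤ s • v + (u - s • v) := add_le_add le_rfl h
          _ = u := by abel
      by_cases hbt1 : s + t ≤ 1
      · have hmem : s + t ∈ S := ⟨⟨by linarith, hbt1⟩, hbt⟩
        have := le_csSup hcpt.bddAbove hmem
        linarith
      · have h1 : (s + t) • v ≤ (1:ℝ) • v := by
          rw [one_smul]; exact hbt.trans huv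
        have h2 : (s + t - 1) • v ≤ (s + t - 1) • (0:E) := by
          rw [smul_zero]
          rw [← sub_nonpos, ← sub_smul] at h1
          exact h1
        have h3 : v ≤ 0 := (smul_le_smul_iff_of_pos_left (by linarith)).1 h2
        have hveq : v = 0 := le_antisymm h3 hv0
        exact hu (le_antisymm (hveq ▸ huv) hu0)
  have hlim : Tendsto (fun k : ℕ => (1 / (k + 1) : ℝ) • v) atTop (𝓝 0) := by
    simpa using (tendsto_one_div_add_atTop_nhds_zero_nat (𝕜 := ℝ)).smul_const v
  have hle : u - s • v ≤ 0 := by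
    refine ge_of_tendsto hlim (Filter.Eventually.of_forall fun k => ?_)
    refine key _ (by positivity) ?_
    rw [div_le_one (by positivity)]
    exact le_add_of_nonneg_left (Nat.cast_nonneg k)
  have : u - s • v = 0 := le_antisymm hle hw0
  exact sub_eq_zero.1 this

end Aux

/-- Let `T : c₀ → E` be an order isomorphism onto a Banach lattice `E` with
`T 0 = 0`, and let `xₙ = T eₙ` where `(eₙ)` is the unit vector basis of `c₀`. Then `(xₙ)` is a
disjoint sequence of positive elements of `E`, and for each `n` and each `a ≥ 0` there is
`b ≥ 0` with `T (a • eₙ) = b • xₙ`. -/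
theorem stmt5 (E : Type*) [NormedAddCommGroup E] [Lattice E] [IsOrderedAddMonoid E]
    [HasSolidNorm E] [NormedSpace ℝ E] [PosSMulStrictMono ℝ E]
    [CompleteSpace E]
    (T : C₀(ℕ, ℝ) → E) (hbij : Function.Bijective T)
    (hord : ∀ f g : C₀(ℕ, ℝ), f ≤ g ↔ T f ≤ T g) (hzero : T 0 = 0) :
    (∀ n : ℕ, 0 ≤ T (c0unit n)) ∧
    (∀ m n : ℕ, m ≠ n → |T (c0unit m)| ⊓ |T (c0unit n)| = 0) ∧
    (∀ (n : ℕ) (a : ℝ), 0 ≤ a →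
      ∃ b : ℝ, 0 ≤ b ∧ T (a • c0unit n) = b • T (c0unit n)) := by
  have hle : ∀ f g : C₀(ℕ, ℝ), f ≤ g ↔ ∀ m, f m ≤ g m := fun f g => Iff.rfl
  have hposT : ∀ f : C₀(ℕ, ℝ), 0 ≤ f ↔ 0 ≤ T f := fun f => by
    rw [← hzero]; exact hord 0 f
  have hunit_pos : ∀ n : ℕ, (0 : C₀(ℕ, ℝ)) ≤ c0unit n := by
    intro n
    rw [hle]
    intro m
    show (0:ℝ) ≤ if m = n then 1 else 0
    split <;> norm_num
  have part1 : ∀ n : ℕ, 0 ≤ T (c0unit n) := fun n => (hposT _).1 (hunit_pos n)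
  refine ⟨part1, ?_, ?_⟩
  · -- disjointness
    intro m n hmn
    rw [abs_of_nonneg (part1 m), abs_of_nonneg (part1 n)]
    obtain ⟨h, hh⟩ := hbij.surjective (T (c0unit m) ⊓ T (c0unit n))
    have h0 : 0 ≤ h := (hposT h).2 (hh ▸ le_inf (part1 m) (part1 n))
    have hm : h ≤ c0unit m := (hord _ _).2 (hh ▸ inf_le_left)
    have hn : h ≤ c0unit n := (hord _ _).2 (hh ▸ inf_le_right)
    have : h = 0 := by
      apply le_antisymm _ h0
      rw [hle]
      intro k
      show h k ≤ (0:ℝ)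
      by_cases hk : k = m
      · have := (hle _ _).1 hn k
        simpa [c0unit, hk, hmn] using this
      · have := (hle _ _).1 hm k
        simpa [c0unit, hk] using this
    rw [← hh, this, hzero]
  · -- scalar multiples
    intro n a ha
    set c : ℝ := max a 1 with hc
    have hca : a ≤ c := le_max_left _ _
    have hc1 : (1:ℝ) ≤ c := le_max_right _ _
    have hsmul_le : ∀ s t : ℝ, s ≤ t → s • c0unit n ≤ t • c0unit n := by
      intro s t hst
      rw [hle]
      intro m
      show s * (if m = n then 1 else 0) ≤ t * (if m = n then 1 else 0)
      split <;> nlinarith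
    set z : E := T (c • c0unit n) with hz
    have hchain : ∀ p q : E, 0 ≤ p → p ≤ z → 0 ≤ q → q ≤ z → p ≤ q ∨ q ≤ p := by
      intro p q hp hpz hq hqz
      obtain ⟨f, rfl⟩ := hbij.surjective p
      obtain ⟨g, rfl⟩ := hbij.surjective q
      have hf0 : 0 ≤ f := (hposT f).2 hp
      have hfz : f ≤ c • c0unit n := (hord _ _).2 hpz
      have hg0 : 0 ≤ g := (hposT g).2 hq
      have hgz : g ≤ c • c0unit n := (hord _ _).2 hqz
      have hzero_off : ∀ (f : C₀(ℕ, ℝ)), 0 ≤ f → f ≤ c • c0unit n →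
          ∀ m, m ≠ n → f m = 0 := by
        intro f hf0 hfz m hm
        have h1 := (hle _ _).1 hf0 m
        have h2 := (hle _ _).1 hfz m
        have h2' : f m ≤ c * (if m = n then 1 else 0) := h2
        rw [if_neg hm] at h2'
        have h1' : (0:ℝ) ≤ f m := h1
        linarith [h2']
      rcases le_total (f n) (g n) with h | h
      · left
        apply (hord _ _).1
        rw [hle]
        intro m
        by_cases hm : m = n
        · subst hm; exact h
        · rw [hzero_off f hf0 hfz m hm, hzero_off g hg0 hgz m hm]
      · right
        apply (hord _ _).1
        rw [hle]
        intro m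
        by_cases hm : m = n
        · subst hm; exact h
        · rw [hzero_off f hf0 hfz m hm, hzero_off g hg0 hgz m hm]
    have hy0 : 0 ≤ T (a • c0unit n) := (hposT _).1 (by
      have := hsmul_le 0 a ha
      simpa using this)
    have hx0 : 0 ≤ T (c0unit n) := part1 n
    have hone : (1:ℝ) • c0unit n = c0unit n := one_smul _ _
    rcases le_total a 1 with h | h
    · -- a ≤ 1 : T(a eₙ) ≤ T(eₙ) ≤ z
      have huv : T (a • c0unit n) ≤ T (c0unit n) := by
        apply (hord _ _).1
        have := hsmul_le a 1 h
        rwa [hone] at this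
      have hvz : T (c0unit n) ≤ z := by
        apply (hord _ _).1
        have := hsmul_le 1 c hc1
        rwa [hone] at this
      obtain ⟨s, hs0, hsv⟩ := aux_chain_smul z (T (c0unit n)) (T (a • c0unit n))
        hy0 huv hvz hchain
      exact ⟨s, hs0, hsv⟩
    · -- 1 ≤ a : T(eₙ) ≤ T(a eₙ) ≤ z
      have huv : T (c0unit n) ≤ T (a • c0unit n) := by
        apply (hord _ _).1
        have := hsmul_le 1 a h
        rwa [hone] at this
      have hvz : T (a • c0unit n) ≤ z := by
        apply (hord _ _).1
        exact hsmul_le a c hca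
      obtain ⟨s, hs0, hsv⟩ := aux_chain_smul z (T (a • c0unit n)) (T (c0unit n))
        hx0 huv hvz hchain
      have hsne : s ≠ 0 := by
        intro h0
        rw [h0, zero_smul] at hsv
        have : c0unit n = 0 := hbij.injective (hsv.trans hzero.symm)
        have h1 : c0unit n n = (0:ℝ) := by rw [this]; rfl
        have h2 : c0unit n n = (1:ℝ) := if_pos rfl
        rw [h2] at h1
        norm_num at h1
      refine ⟨s⁻¹, inv_nonneg.2 hs0, ?_⟩
      rw [hsv, smul_smul, inv_mul_cancel₀ hsne, one_smul]
end

section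
/- Let E and F be Banach lattices and let T : E → F be an order isomorphism with T0 = 0. If (x_k) is a disjoint sequence of positive elements of E with inf_k ‖x_k‖ > 0, then there exists N ∈ ℕ such that limsup_k ‖T(N·x_k)‖ > 0. -/
/-- Let `T : E → F` be an order isomorphism between Banach lattices with
`T 0 = 0`. If `(xₖ)` is a disjoint sequence of positive elements of `E` with
`inf_k ‖xₖ‖ > 0`, then there is `N ∈ ℕ` with `limsup_k ‖T (N • xₖ)‖ > 0`, i.e. for some
`δ > 0` we have `‖T (N • xₖ)‖ ≥ δ` frequently. -/
theorem stmt12 (E : Type*) [NormedAddCommGroup E] [Lattice E] [IsOrderedAddMonoid E] [HasSolidNorm E] [NormedSpace ℝ E] [PosSMulStrictMono ℝ E] [PosSMulReflectLT ℝ E]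
    [CompleteSpace E]
    (F : Type*) [NormedAddCommGroup F] [Lattice F] [IsOrderedAddMonoid F] [HasSolidNorm F] [NormedSpace ℝ F] [PosSMulStrictMono ℝ F] [PosSMulReflectLT ℝ F]
    [CompleteSpace F]
    (T : E → F) (hbij : Function.Bijective T) (hord : ∀ x y : E, x ≤ y ↔ T x ≤ T y)
    (hzero : T 0 = 0)
    (x : ℕ → E) (hpos : ∀ k, 0 ≤ x k) (hdisj : ∀ m k : ℕ, m ≠ k → x m ⊓ x k = 0)
    (hinf : ∃ c > (0 : ℝ), ∀ k, c ≤ ‖x k‖) :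
    ∃ N : ℕ, ∃ δ > (0 : ℝ), ∃ᶠ k in Filter.atTop, δ ≤ ‖T ((N : ℝ) • x k)‖ := by
  by_contra hcon
  push_neg at hcon
  have hsel : ∀ N : ℕ, ∃ k, ‖T ((N : ℝ) • x k)‖ < (1 / 2 : ℝ) ^ N := fun N =>
    by
    simpa using (hcon N ((1 / 2) ^ N) (by positivity)).exists
  choose k hk using hsel
  set f : ℕ → F := fun N => T ((N : ℝ) • x (k N)) with hf
  have hsm : ∀ N : ℕ, (0 : E) ≤ (N : ℝ) • x (k N) := fun N =>
    smul_nonneg (Nat.cast_nonneg N) (hpos _)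
  have hfnn : ∀ N, 0 ≤ f N := fun N => by
    rw [hf, ← hzero]; exact (hord 0 _).mp (hsm N)
  have hsum : Summable f :=
    Summable.of_norm_bounded summable_geometric_two (fun N => (hk N).le)
  obtain ⟨y, hy⟩ := hbij.surjective (∑' N, f N)
  obtain ⟨c, hc, hcle⟩ := hinf
  obtain ⟨N, hN⟩ := exists_nat_gt (‖y‖ / c)
  have h1 : f N ≤ ∑' n, f n := Summable.le_tsum hsum N (fun j _ => hfnn j)
  have h2 : (N : ℝ) • x (k N) ≤ y := (hord _ _).mpr (by rw [hy]; exact h1)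
  have h3 : ‖(N : ℝ) • x (k N)‖ ≤ ‖y‖ := by
    refine norm_le_norm_of_abs_le_abs ?_
    rw [abs_of_nonneg (hsm N), abs_of_nonneg ((hsm N).trans h2)]
    exact h2
  rw [norm_smul, Real.norm_natCast] at h3
  have h4 : (N : ℝ) * c ≤ (N : ℝ) * ‖x (k N)‖ :=
    mul_le_mul_of_nonneg_left (hcle _) (Nat.cast_nonneg N)
  have h5 : ‖y‖ / c < (N : ℝ) := hN
  nlinarith [h4.trans h3, (div_lt_iff₀ hc).mp h5]
end
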